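/- Let δ ∈ ℂ satisfy δ⁴ + 1 = 0, so [0 : δ : 1] lies on C_{a,0} : x⁴ + y⁴ + z⁴ + a x² y² = 0. Then [0:δ:1] is a flex point of C_{a,0} (i.e. H_F(0,δ,1) = 0) if and only if a = 0. -/
import Mathlib


open MvPolynomial

/-- The Kuribayashi quartic with one parameter: `F = x⁴ + y⁴ + z⁴ + a x² y²`. -/
noncomputable def Fq (a : ℂ) : MvPolynomial (Fin 3) ℂ :=
  X 0 ^ 4 + X 1 ^ 4 + X 2 ^ 4 + C a * X 0 ^ 2 * X 1 ^ 2

/-- The Hessian determinant of `Fq a`. -/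
noncomputable def Hq (a : ℂ) : MvPolynomial (Fin 3) ℂ :=
  Matrix.det (Matrix.of fun i j : Fin 3 => pderiv i (pderiv j (Fq a)))

lemma pderiv_four (i : Fin 3) : (pderiv i) (4 : MvPolynomial (Fin 3) ℂ) = 0 := by
  rw [← map_ofNat (C : ℂ →+* MvPolynomial (Fin 3) ℂ) 4, pderiv_C]

/-- For `δ` with `δ⁴ + 1 = 0`, the point `[0:δ:1]` lies on `C_{a,0}`, and it is a flex
point (i.e. the Hessian vanishes there) if and only if `a = 0`. -/
theorem zero_delta_one_flex_iff (a δ : ℂ) (ha : (a ^ 2 - 1) * (a ^ 2 - 4) ≠ 0)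
    (hδ : δ ^ 4 + 1 = 0) :
    eval ![0, δ, 1] (Fq a) = 0 ∧ (eval ![0, δ, 1] (Hq a) = 0 ↔ a = 0) := by
  have h1 : eval ![0, δ, 1] (Fq a) = 0 := by
    simp [Fq]
    linear_combination hδ
  refine ⟨h1, ?_⟩
  have h2 : eval ![0, δ, 1] (Hq a) = -288 * a := by
    simp [Hq, Fq, Matrix.det_fin_three, pderiv_X, pderiv_four]
    ring_nf
    linear_combination (288 * a) * hδ
  rw [h2]
  constructor
  · intro h; linear_combination -h / 288
  · intro h; rw [h]; ring
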